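/- arXiv:1606.06444 — 2 statements merged into one kernel-verified Lean document; each statement's English description precedes it below -/
import Mathlib

section
/- In the free group F_n, the Hurwitz action of the braid group B_n on the set Red(γ) of n-tuples (r_1,...,r_n) of conjugates of the generators whose product equals γ = σ_1σ_2⋯σ_n is transitive. -/
set_option linter.unusedSectionVars false

namespace HurwitzProof
open FreeGroup List

variable {α : Type*} [DecidableEq α]

/-- A word is reduced: no adjacent cancelling pair. -/
def IsRed (L : List (α × Bool)) : Prop := L.IsChain fun a b => ¬(a.1 = b.1 ∧ a.2 = !b.2)

lemma IsRed.tail {L : List (α × Bool)} (h : IsRed L) : IsRed L.tail := List.IsChain.tail h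

lemma reduce_eq_self : ∀ {L : List (α × Bool)}, IsRed L → reduce L = L := by
  intro L h
  induction L with
  | nil => rfl
  | cons a L ih =>
    have hL : IsRed L := h.tail
    rw [reduce.cons, ih hL]
    cases L with
    | nil => rfl
    | cons b tl =>
      have hc : ¬(a.1 = b.1 ∧ a.2 = !b.2) := (List.isChain_cons_cons.1 h).1
      simp [hc]

lemma isRed_reduce (L : List (α × Bool)) : IsRed (reduce L) := by
  induction L with
  | nil => simp [IsRed]
  | cons a L ih =>
    rw [reduce.cons]
    rcases hR : reduce L with _ | ⟨b, tl⟩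
    · simp [IsRed]
    · rw [hR] at ih
      by_cases hc : a.1 = b.1 ∧ a.2 = !b.2
      · show IsRed (if a.1 = b.1 ∧ a.2 = !b.2 then tl else a :: b :: tl)
        rw [if_pos hc]; exact ih.tail
      · show IsRed (if a.1 = b.1 ∧ a.2 = !b.2 then tl else a :: b :: tl)
        rw [if_neg hc]; exact List.isChain_cons_cons.2 ⟨hc, ih⟩

lemma isRed_toWord (x : FreeGroup α) : IsRed x.toWord := by
  rw [← reduce_toWord]; exact isRed_reduce _

lemma toWord_mk_self {L : List (α × Bool)} (h : IsRed L) : (mk L).toWord = L := by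
  rw [toWord_mk, reduce_eq_self h]

lemma IsRed.append_left {L M : List (α × Bool)} (h : IsRed (L ++ M)) : IsRed L :=
  (List.isChain_append.1 h).1

lemma IsRed.append_right {L M : List (α × Bool)} (h : IsRed (L ++ M)) : IsRed M :=
  (List.isChain_append.1 h).2.1

lemma invRev_append (L M : List (α × Bool)) : invRev (L ++ M) = invRev M ++ invRev L := by
  simp [invRev]

lemma invRev_singleton (x : α) (b : Bool) : invRev [(x, b)] = [(x, !b)] := rfl

lemma invRev_cons (a : α × Bool) (L : List (α × Bool)) :
    invRev (a :: L) = invRev L ++ [(a.1, !a.2)] := by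
  simp [invRev]

lemma isRed_invRev {L : List (α × Bool)} (h : IsRed L) : IsRed (invRev L) := by
  unfold IsRed FreeGroup.invRev
  rw [List.isChain_reverse, List.isChain_map]
  refine h.imp ?_
  rintro ⟨a, s⟩ ⟨b, t⟩ hab ⟨h1, h2⟩
  exact hab ⟨h1.symm, by revert h2; cases s <;> cases t <;> simp⟩

lemma norm_eq_length (x : FreeGroup α) : norm x = x.toWord.length := rfl

/-- positive words are reduced -/
lemma isRed_of_positive {L : List (α × Bool)} (h : ∀ p ∈ L, p.2 = true) : IsRed L := by
  induction L with
  | nil => simp [IsRed]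
  | cons a L ih =>
    have ha : a.2 = true := h a (by simp)
    have hL := ih (fun p hp => h p (by simp [hp]))
    cases L with
    | nil => simp [IsRed]
    | cons b tl =>
      have hb : b.2 = true := h b (by simp)
      refine List.isChain_cons_cons.2 ⟨?_, hL⟩
      rintro ⟨-, h2⟩
      rw [ha, hb] at h2; simp at h2

lemma cancel_lemma : ∀ (R S : List (α × Bool)), IsRed R → IsRed S →
    ∃ R' S' c, R = R' ++ c ∧ S = invRev c ++ S' ∧ IsRed (R' ++ S') ∧
      reduce (R ++ S) = R' ++ S' := by
  intro R
  induction R using List.reverseRecOn with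
  | nil =>
    intro S _ hS
    exact ⟨[], S, [], by simp, by simp, hS, by simpa using reduce_eq_self hS⟩
  | append_singleton R₀ a ih =>
    intro S hR hS
    rcases hSc : S with _ | ⟨b, S₁⟩
    · refine ⟨R₀ ++ [a], [], [], by simp, by simp, by simpa using hR, ?_⟩
      rw [List.append_nil, reduce_eq_self hR]
    · subst hSc
      by_cases hb : b = (a.1, !a.2)
      · have hR₀ : IsRed R₀ := hR.append_left
        have hS₁ : IsRed S₁ := hS.tail
        obtain ⟨R', S', c, h1, h2, h3, h4⟩ := ih S₁ hR₀ hS₁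
        refine ⟨R', S', c ++ [a], by rw [h1, List.append_assoc], ?_, h3, ?_⟩
        · rw [invRev_append, invRev_singleton, h2, hb]
          simp
        · have hstep : Red.Step (R₀ ++ a :: b :: S₁) (R₀ ++ S₁) := by
            obtain ⟨x, s⟩ := a
            rw [hb]
            exact Red.Step.not
          have e1 : (R₀ ++ [a]) ++ b :: S₁ = R₀ ++ a :: b :: S₁ := by simp
          rw [e1, reduce.Step.eq hstep, h4]
      · have hjunc : ¬(a.1 = b.1 ∧ a.2 = !b.2) := by
          rintro ⟨h1, h2⟩
          exact hb (by ext <;> simp [h1.symm, h2] <;> cases b.2 <;> simp_all)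
        have hred : IsRed ((R₀ ++ [a]) ++ b :: S₁) := by
          refine List.isChain_append.2 ⟨hR, hS, ?_⟩
          intro x hx y hy
          rw [List.getLast?_concat] at hx
          simp at hx hy
          exact hx ▸ hy ▸ hjunc
        exact ⟨R₀ ++ [a], b :: S₁, [], by simp, by simp, hred, by rw [reduce_eq_self hred]⟩

lemma of_eq_mk (x : α) : (of x : FreeGroup α) = mk [(x, true)] := rfl

lemma pal_decomp (x : α) : ∀ (N : ℕ) (w : FreeGroup α), w.toWord.length ≤ N →
    ∃ C : List (α × Bool), IsRed (C ++ (x, true) :: invRev C) ∧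
      w * of x * w⁻¹ = mk (C ++ (x, true) :: invRev C) := by
  intro N
  induction N with
  | zero =>
    intro w hw
    have : w = 1 := by
      rw [← toWord_eq_nil_iff, ← List.length_eq_zero_iff]
      omega
    subst this
    exact ⟨[], by simpa [IsRed] using List.isChain_singleton _, by simp [of_eq_mk]⟩
  | succ N ih =>
    intro w hw
    rcases List.eq_nil_or_concat w.toWord with hW | ⟨W₀, a, hW⟩
    · have : w = 1 := toWord_eq_nil_iff.1 hW
      subst this
      exact ⟨[], by simpa [IsRed] using List.isChain_singleton _, by simp [of_eq_mk]⟩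
    · rw [List.concat_eq_append] at hW
      have hwred : IsRed (W₀ ++ [a]) := by rw [← hW]; exact isRed_toWord w
      have hR₀ : IsRed W₀ := hwred.append_left
      have hwmk : w = mk (W₀ ++ [a]) := by rw [← hW, mk_toWord]
      by_cases hax : a.1 = x
      · have haeq : a = (x, a.2) := Prod.ext hax rfl
        have hlen : (mk W₀ : FreeGroup α).toWord.length ≤ N := by
          rw [toWord_mk_self hR₀]
          have h2 : w.toWord.length = W₀.length + 1 := by rw [hW]; simp
          omega
        obtain ⟨C, hC1, hC2⟩ := ih (mk W₀) hlen
        refine ⟨C, hC1, ?_⟩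
        rw [← hC2, hwmk]
        have hsplit : (mk (W₀ ++ [a]) : FreeGroup α) = mk W₀ * mk [a] := by rw [mul_mk]
        rw [hsplit, haeq]
        rcases ha2 : a.2
        · have h2 : (mk [(x, false)] : FreeGroup α) = (of x)⁻¹ := by
            rw [of_eq_mk, inv_mk]; rfl
          rw [h2]; group
        · have h2 : (mk [(x, true)] : FreeGroup α) = of x := rfl
          rw [h2]; group
      · have hinv : invRev (W₀ ++ [a]) = (a.1, !a.2) :: invRev W₀ := by
          rw [invRev_append]; rfl
        refine ⟨W₀ ++ [a], ?_, ?_⟩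
        · refine List.isChain_append.2 ⟨hwred, ?_, ?_⟩
          · rw [hinv]
            refine List.isChain_cons_cons.2 ⟨?_, ?_⟩
            · rintro ⟨h1, -⟩; exact hax h1.symm
            · rw [← hinv]; exact isRed_invRev hwred
          · intro p hp q hq
            rw [List.getLast?_concat] at hp
            simp only [Option.mem_some_iff, List.head?_cons] at hp hq
            subst hp; subst hq
            rintro ⟨h1, -⟩
            exact hax h1
        · rw [hwmk, of_eq_mk, inv_mk, mul_mk, mul_mk]
          simp

lemma mk_pal_eq (C : List (α × Bool)) (y : α) :
    (mk (C ++ (y, true) :: invRev C) : FreeGroup α) = mk C * of y * (mk C)⁻¹ := by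
  rw [of_eq_mk, inv_mk, mul_mk, mul_mk]
  simp

lemma norm_pal {C : List (α × Bool)} {y : α} (h : IsRed (C ++ (y, true) :: invRev C)) :
    norm (mk (C ++ (y, true) :: invRev C) : FreeGroup α) = 2 * C.length + 1 := by
  rw [norm_eq_length, toWord_mk_self h]
  simp [invRev_length]
  omega

lemma norm_conj_le (z : FreeGroup α) (y : α) :
    norm (z * of y * z⁻¹) ≤ 2 * norm z + 1 := by
  calc norm (z * of y * z⁻¹) ≤ norm (z * of y) + norm z⁻¹ := norm_mul_le _ _
    _ ≤ norm z + norm (of y) + norm z⁻¹ := by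
        have := norm_mul_le z (of y)
        omega
    _ = 2 * norm z + 1 := by rw [norm_inv_eq, norm_of]; omega

lemma moveL1 {u v : FreeGroup α} {W V V'' : List (α × Bool)} {x y : α}
    (hu : u = mk (W ++ (x, true) :: invRev W))
    (hv : v = mk (V ++ (y, true) :: invRev V))
    (hVred : IsRed (V ++ (y, true) :: invRev V))
    (hV : V = W ++ (x, false) :: V'') :
    norm (u * v * u⁻¹) < norm v := by
  have hnv : norm v = 2 * V.length + 1 := by rw [hv, norm_pal hVred]
  have hz : u * mk V = mk W * mk V'' := by
    have h1 : (mk V : FreeGroup α) = mk W * mk [(x, false)] * mk V'' := by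
      rw [mul_mk, mul_mk, hV]; simp
    have h2 : (mk [(x, false)] : FreeGroup α) = (of x)⁻¹ := by rw [of_eq_mk, inv_mk]; rfl
    rw [hu, mk_pal_eq, h1, h2]
    group
  have hform : u * v * u⁻¹ = (u * mk V) * of y * (u * mk V)⁻¹ := by
    rw [hv, mk_pal_eq]
    group
  have hb : norm (u * v * u⁻¹) ≤ 2 * (W.length + V''.length) + 1 := by
    rw [hform, hz]
    calc norm (mk W * mk V'' * of y * (mk W * mk V'')⁻¹) ≤ 2 * norm (mk W * mk V'') + 1 :=
          norm_conj_le _ _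
      _ ≤ 2 * (W.length + V''.length) + 1 := by
          have h3 := norm_mul_le (mk W : FreeGroup α) (mk V'')
          have h4 := norm_mk_le (L₁ := W) (α := α)
          have h5 := norm_mk_le (L₁ := V'') (α := α)
          omega
  have hVl : V.length = W.length + 1 + V''.length := by rw [hV]; simp; omega
  omega

lemma moveL2 {u v : FreeGroup α} {W V W'' : List (α × Bool)} {x y : α}
    (hu : u = mk (W ++ (x, true) :: invRev W))
    (hWred : IsRed (W ++ (x, true) :: invRev W))
    (hv : v = mk (V ++ (y, true) :: invRev V))
    (hW : W = V ++ (y, true) :: W'') :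
    norm (v⁻¹ * u * v) < norm u := by
  have hnu : norm u = 2 * W.length + 1 := by rw [hu, norm_pal hWred]
  have hz : v⁻¹ * mk W = mk V * mk W'' := by
    have h1 : (mk W : FreeGroup α) = mk V * mk [(y, true)] * mk W'' := by
      rw [mul_mk, mul_mk, hW]; simp
    have h2 : (mk [(y, true)] : FreeGroup α) = of y := rfl
    rw [hv, mk_pal_eq, h1, h2]
    group
  have hform : v⁻¹ * u * v = (v⁻¹ * mk W) * of x * (v⁻¹ * mk W)⁻¹ := by
    rw [hu, mk_pal_eq]
    group
  have hb : norm (v⁻¹ * u * v) ≤ 2 * (V.length + W''.length) + 1 := by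
    rw [hform, hz]
    calc norm (mk V * mk W'' * of x * (mk V * mk W'')⁻¹) ≤ 2 * norm (mk V * mk W'') + 1 :=
          norm_conj_le _ _
      _ ≤ 2 * (V.length + W''.length) + 1 := by
          have h3 := norm_mul_le (mk V : FreeGroup α) (mk W'')
          have h4 := norm_mk_le (L₁ := V) (α := α)
          have h5 := norm_mk_le (L₁ := W'') (α := α)
          omega
  have hWl : W.length = V.length + 1 + W''.length := by rw [hW]; simp; omega
  omega

/-- conjugate of a generator -/
def IsCG (u : FreeGroup α) : Prop := ∃ (x : α) (w : FreeGroup α), u = w * of x * w⁻¹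

lemma isCG_conj {u g : FreeGroup α} (h : IsCG u) : IsCG (g * u * g⁻¹) := by
  obtain ⟨x, w, rfl⟩ := h
  exact ⟨x, g * w, by group⟩

/-- total degree homomorphism -/
def deg : FreeGroup α →* Multiplicative ℤ := lift (fun _ => Multiplicative.ofAdd 1)

lemma deg_of (x : α) : deg (of x) = Multiplicative.ofAdd 1 := lift_apply_of

lemma deg_isCG {u : FreeGroup α} (h : IsCG u) : deg u = Multiplicative.ofAdd 1 := by
  obtain ⟨x, w, rfl⟩ := h
  rw [_root_.map_mul, _root_.map_mul, _root_.map_inv, deg_of]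
  group
  simp

lemma deg_mk_pos (P : List (α × Bool)) (h : ∀ p ∈ P, p.2 = true) :
    deg (mk P : FreeGroup α) = Multiplicative.ofAdd (P.length : ℤ) := by
  induction P with
  | nil => simp [← toWord_eq_nil_iff, toWord_one]; rfl
  | cons a P ih =>
    have ha : a.2 = true := h a (by simp)
    have h1 : (mk (a :: P) : FreeGroup α) = mk [a] * mk P := by rw [mul_mk]; rfl
    have h2 : (mk [a] : FreeGroup α) = of a.1 := by
      rw [of_eq_mk]
      congr 1
      rw [← ha]
    rw [h1, _root_.map_mul, h2, deg_of, ih (fun p hp => h p (by simp [hp]))]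
    rw [← ofAdd_add]
    congr 1
    simp [add_comm]

lemma deg_prod_isCG (l : List (FreeGroup α)) (h : ∀ u ∈ l, IsCG u) :
    deg l.prod = Multiplicative.ofAdd (l.length : ℤ) := by
  induction l with
  | nil => simp
  | cons a l ih =>
    rw [List.prod_cons, _root_.map_mul, deg_isCG (h a (by simp)), ih (fun u hu => h u (by simp [hu]))]
    rw [← ofAdd_add]
    congr 1
    simp [add_comm]

lemma isCG_ne_one {u : FreeGroup α} (h : IsCG u) : u ≠ 1 := by
  intro h1
  have := deg_isCG h
  rw [h1, _root_.map_one] at this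
  have h2 : (0 : ℤ) = 1 := by
    have := Multiplicative.ofAdd.injective (a₁ := (0:ℤ)) (a₂ := 1) this
    exact this
  omega

lemma eq_of_norm_one {u : FreeGroup α} (hcg : IsCG u) (h : norm u = 1) : ∃ a, u = of a := by
  rw [norm_eq_length] at h
  rcases hW : u.toWord with _ | ⟨p, L⟩
  · rw [hW] at h; simp at h
  · rw [hW] at h
    simp at h
    have hL : L = [] := by simpa using h
    subst hL
    have humk : u = mk [p] := by rw [← hW, mk_toWord]
    rcases hp2 : p.2
    · exfalso
      have hd : deg u = Multiplicative.ofAdd (-1 : ℤ) := by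
        have h2 : u = (of p.1)⁻¹ := by
          rw [humk, of_eq_mk, inv_mk]
          congr 1
          simp [invRev, ← hp2]
        rw [h2, _root_.map_inv, deg_of]
        rfl
      have := (deg_isCG hcg).symm.trans hd
      have h3 := Multiplicative.ofAdd.injective (a₁ := (1:ℤ)) (a₂ := -1) this
      omega
    · refine ⟨p.1, ?_⟩
      rw [humk, of_eq_mk]
      congr 1
      rw [← hp2]

lemma prefix_eq {β : Type*} {A B C D : List β} (h : A ++ B = C ++ D) (hl : A.length ≤ C.length) :
    C = A ++ C.drop A.length := by
  have h1 : A = C.take A.length := by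
    calc A = (A ++ B).take A.length := by rw [List.take_left]
    _ = (C ++ D).take A.length := by rw [h]
    _ = C.take A.length := List.take_append_of_le_length hl
  conv_lhs => rw [← List.take_append_drop A.length C, ← h1]

lemma suffix_eq {β : Type*} {A B C D : List β} (h : A ++ B = C ++ D) (hl : D.length ≤ B.length) :
    B = B.take (B.length - D.length) ++ D := by
  have hC : C.length = A.length + (B.length - D.length) := by
    have := congrArg List.length h
    simp at this
    omega
  have h1 : D = B.drop (B.length - D.length) := by
    calc D = (C ++ D).drop C.length := by rw [List.drop_left]
    _ = (A ++ B).drop (A.length + (B.length - D.length)) := by rw [h, hC]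
    _ = B.drop (B.length - D.length) := by rw [List.drop_length_add_append]
  conv_lhs => rw [← List.take_append_drop (B.length - D.length) B]
  rw [← h1]

def NoDec (l : List (FreeGroup α)) : Prop :=
  ∀ l₁ (a b : FreeGroup α) l₂, l = l₁ ++ a :: b :: l₂ →
    FreeGroup.norm b ≤ FreeGroup.norm (a * b * a⁻¹) ∧
    FreeGroup.norm a ≤ FreeGroup.norm (b⁻¹ * a * b)

lemma inv_lemma : ∀ (l : List (FreeGroup α)) (v : FreeGroup α),
    (∀ u ∈ l ++ [v], IsCG u) → NoDec (l ++ [v]) →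
    ∃ (C Q : List (α × Bool)) (y : α),
      IsRed (C ++ (y, true) :: invRev C) ∧ v = mk (C ++ (y, true) :: invRev C) ∧
      ((l ++ [v]).prod).toWord = Q ++ (y, true) :: invRev C ∧
      ∀ u ∈ l ++ [v], norm u + 2 * (l ++ [v]).length ≤ 2 * ((l ++ [v]).prod).toWord.length + 1 := by
  intro l
  induction l using List.reverseRecOn with
  | nil =>
    intro v hcg hnd
    obtain ⟨x, w, hxw⟩ := hcg v (by simp)
    obtain ⟨C, hC1, hC2⟩ := pal_decomp x w.toWord.length w le_rfl
    have hveq : v = mk (C ++ (x, true) :: invRev C) := hxw.trans hC2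
    have htv : v.toWord = C ++ (x, true) :: invRev C := by rw [hveq, toWord_mk_self hC1]
    refine ⟨C, C, x, hC1, hveq, by simpa using htv, ?_⟩
    intro u hu
    simp at hu
    subst hu
    have h1 : norm u = u.toWord.length := rfl
    have h2 : u.toWord.length = 2 * C.length + 1 := by rw [htv]; simp [invRev_length]; omega
    simp only [List.nil_append, List.prod_cons, List.prod_nil, mul_one, List.length_cons,
      List.length_nil]
    omega
  | append_singleton l₀ u ihl =>
    intro v hcg hnd
    have hcg₀ : ∀ z ∈ l₀ ++ [u], IsCG z := by
      intro z hz
      refine hcg z ?_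
      simp only [List.append_assoc, List.mem_append] at hz ⊢
      tauto
    have hnd₀ : NoDec (l₀ ++ [u]) := by
      intro l₁ a b l₂ he
      exact hnd l₁ a b (l₂ ++ [v]) (by rw [he]; simp)
    obtain ⟨W, Q₀, x, hWred, huW, hR₀eq, hbounds⟩ := ihl u hcg₀ hnd₀
    obtain ⟨xv, wv, hv0⟩ := hcg v (by simp)
    obtain ⟨V, hVred, hvV⟩ := pal_decomp xv wv.toWord.length wv le_rfl
    have hv : v = mk (V ++ (xv, true) :: invRev V) := hv0.trans hvV
    set P₀ := ((l₀ ++ [u]).prod) with hP₀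
    set R₀ := P₀.toWord with hR₀def
    have hR₀red : IsRed R₀ := isRed_toWord _
    set S := V ++ (xv, true) :: invRev V with hSdef
    obtain ⟨R', S', c, hc1, hc2, hc3, hc4⟩ := cancel_lemma R₀ S hR₀red hVred
    have hprod : ((l₀ ++ [u] ++ [v]).prod) = P₀ * v := by
      rw [List.prod_append, List.prod_cons, List.prod_nil, mul_one]
    have htoword : ((l₀ ++ [u] ++ [v]).prod).toWord = R' ++ S' := by
      rw [hprod, hv]
      have : P₀ * mk S = mk (R₀ ++ S) := by
        conv_lhs => rw [← mk_toWord (x := P₀)]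
        rw [mul_mk]
      rw [this, toWord_mk, hc4]
    set t := c.length with htdef
    have hlast : norm v ≤ norm (u * v * u⁻¹) ∧ norm u ≤ norm (v⁻¹ * u * v) :=
      hnd l₀ u v [] (by simp)
    -- length bookkeeping
    have hlenR₀ : R₀.length = R'.length + t := by rw [hc1]; simp [htdef]
    have hlenS : S.length = 2 * V.length + 1 := by rw [hSdef]; simp [invRev_length]; omega
    have hlenS' : S.length = t + S'.length := by rw [hc2]; simp [invRev_length, htdef]
    have hlenR₀' : R₀.length = Q₀.length + W.length + 1 := by
      rw [hR₀eq]; simp [invRev_length]; omega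
    have hnormu : norm u = 2 * W.length + 1 := by rw [huW, norm_pal hWred]
    have hnormv : norm v = 2 * V.length + 1 := by rw [hv, norm_pal hVred]
    by_cases hgood : t ≤ V.length ∧ t ≤ W.length
    · -- good case
      have hS' : S' = V.drop t ++ (xv, true) :: invRev V := by
        have h1 : S' = S.drop t := by
          rw [hc2]
          rw [List.drop_append_of_le_length (by simp [invRev_length, htdef])]
          simp [invRev_length, htdef]
        rw [h1, hSdef, List.drop_append_of_le_length hgood.1]
      refine ⟨V, R' ++ V.drop t, xv, hVred, hv, ?_, ?_⟩
      · rw [htoword, hS', List.append_assoc]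
      · intro z hz
        have hlen2 : (l₀ ++ [u] ++ [v]).length = (l₀ ++ [u]).length + 1 := by simp
        have hgoal_len : ((l₀ ++ [u] ++ [v]).prod).toWord.length = R'.length + S'.length := by
          rw [htoword]; simp
        have hu_old := hbounds u (by simp)
        rcases List.mem_append.1 hz with hz0 | hz0
        · have hold := hbounds z hz0
          rw [hgoal_len, hlen2]
          omega
        · simp at hz0
          subst hz0
          rw [hgoal_len, hlen2]
          omega
    · -- bad case: derive a decreasing move, contradiction
      exfalso
      rcases le_or_gt V.length W.length with hVW | hVW
      · -- |V| ≤ |W|, so t > |V|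
        have htV : V.length < t := by omega
        -- S.take (|V|+1) computed two ways
        have h1 : (invRev c).take (V.length + 1) = V ++ [(xv, true)] := by
          have e1 : S.take (V.length + 1) = (invRev c).take (V.length + 1) := by
            rw [hc2, List.take_append_of_le_length (by simp [invRev_length]; omega)]
          have e2 : S.take (V.length + 1) = V ++ [(xv, true)] := by
            rw [hSdef]
            rw [show V.length + 1 = V.length + 1 from rfl]
            rw [List.take_append]
            simp
          rw [← e1, e2]
        have hcsplit : c = invRev ((invRev c).drop (V.length + 1)) ++ ((xv, false) :: invRev V) := by
          conv_lhs => rw [← invRev_invRev (L₁ := c)]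
          conv_lhs => rw [← List.take_append_drop (V.length + 1) (invRev c)]
          rw [invRev_append, h1]
          congr 1
          rw [invRev_append]
          rfl
        -- now R₀ = (R' ++ Z₀) ++ (xv,false) :: invRev V  and  R₀ = Q₀ ++ (x,true) :: invRev W
        have hR₀2 : (R' ++ invRev ((invRev c).drop (V.length + 1))) ++ ((xv, false) :: invRev V)
            = Q₀ ++ ((x, true) :: invRev W) := by
          rw [List.append_assoc, ← hcsplit, ← hc1, hR₀eq]
        have hsuf := suffix_eq hR₀2.symm (by simp [invRev_length]; omega)
        -- hsuf : (x,true)::invRev W = take (...) ++ (xv,false)::invRev V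
        rcases Nat.lt_or_ge V.length W.length with hVWs | hVWs
        · -- strict: extract W = V ++ (xv,true) :: invRev Z
          have hlen3 : ((x, true) :: invRev W).length - ((xv, false) :: invRev V).length
              = W.length - V.length := by simp [invRev_length]
          rw [hlen3] at hsuf
          rcases hT : ((x, true) :: invRev W).take (W.length - V.length) with _ | ⟨e, Z⟩
          · rw [hT] at hsuf
            have := congrArg List.length hsuf
            simp [invRev_length] at this
            omega
          · rw [hT] at hsuf
            have hZ : invRev W = Z ++ ((xv, false) :: invRev V) := by
              rw [List.cons_append] at hsuf
              injection hsuf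
            have hWsplit : W = V ++ (xv, true) :: invRev Z := by
              have h5 : W = invRev (Z ++ ((xv, false) :: invRev V)) := by
                rw [← hZ, invRev_invRev]
              rw [h5, invRev_append, invRev_cons]
              simp [invRev_invRev]
            exact absurd hlast.2 (not_le.2 (moveL2 huW hWred hv hWsplit))
        · -- |V| = |W|: letter contradiction
          have hVWeq : V.length = W.length := by omega
          have hlen3 : ((x, true) :: invRev W).length - ((xv, false) :: invRev V).length = 0 := by
            simp [invRev_length]; omega
          rw [hlen3] at hsuf
          simp only [List.take_zero, List.nil_append, List.cons.injEq] at hsuf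
          exact absurd hsuf.1 (by simp)
      · -- |W| < |V|, so t > |W|
        have htW : W.length < t := by omega
        -- c ends with (x,true) :: invRev W
        have hsuf := suffix_eq (hc1.symm.trans hR₀eq) (by simp [invRev_length]; omega)
        -- hsuf : c = c.take (t - (|W|+1)) ++ (x,true) :: invRev W
        have hlen3 : c.length - ((x, true) :: invRev W).length = t - (W.length + 1) := by
          simp [invRev_length, htdef]
        rw [hlen3] at hsuf
        have hinvc : invRev c = (W ++ [(x, false)]) ++ invRev (c.take (t - (W.length + 1))) := by
          conv_lhs => rw [hsuf]
          rw [invRev_append, invRev_cons]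
          simp [invRev_invRev]
        have h1 : S.take (W.length + 1) = W ++ [(x, false)] := by
          rw [hc2, hinvc, List.append_assoc]
          exact List.take_left' (by simp)
        have h2 : S.take (W.length + 1) = V.take (W.length + 1) := by
          rw [hSdef, List.take_append_of_le_length (by omega)]
        have hVsplit : V = W ++ (x, false) :: V.drop (W.length + 1) := by
          conv_lhs => rw [← List.take_append_drop (W.length + 1) V, ← h2, h1]
          simp
        exact absurd hlast.1 (not_le.2 (moveL1 huW hv hVred hVsplit))

def LStep (l l' : List (FreeGroup α)) : Prop :=
  ∃ (l₁ : List (FreeGroup α)) (a b : FreeGroup α) (l₂ : List (FreeGroup α)),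
    l = l₁ ++ a :: b :: l₂ ∧ l' = l₁ ++ (a * b * a⁻¹) :: a :: l₂

lemma exists_map_of (l : List (FreeGroup α)) (h : ∀ u ∈ l, ∃ a, u = of a) :
    ∃ as : List α, l = as.map of := by
  induction l with
  | nil => exact ⟨[], rfl⟩
  | cons u l ih =>
    obtain ⟨a, ha⟩ := h u (by simp)
    obtain ⟨as, has⟩ := ih (fun z hz => h z (by simp [hz]))
    exact ⟨a :: as, by rw [List.map_cons, ← ha, ← has]⟩

lemma prod_map_of (as : List α) :
    ((as.map of).prod : FreeGroup α) = mk (as.map (fun a => (a, true))) := by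
  induction as with
  | nil => rfl
  | cons a as ih =>
    rw [List.map_cons, List.prod_cons, ih, List.map_cons, of_eq_mk, mul_mk]
    rfl

lemma main_list : ∀ (N : ℕ) (l : List (FreeGroup α)),
    (l.map FreeGroup.norm).sum ≤ N →
    (∀ u ∈ l, IsCG u) → (∀ p ∈ (l.prod).toWord, p.2 = true) →
    Relation.EqvGen LStep l ((l.prod).toWord.map (fun p => of p.1)) := by
  intro N
  induction N with
  | zero =>
    intro l hsum hcg _
    rcases l with _ | ⟨u, l⟩
    · exact Relation.EqvGen.refl _
    · exfalso
      have h1 : FreeGroup.norm u = 0 := by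
        simp only [List.map_cons, List.sum_cons] at hsum
        omega
      exact isCG_ne_one (hcg u (by simp)) (norm_eq_zero.1 h1)
  | succ N ih =>
    intro l hsum hcg hpos
    by_cases hnd : NoDec l
    · -- no decreasing move: l is the standard tuple
      have hall : ∀ u ∈ l, FreeGroup.norm u = 1 := by
        rcases List.eq_nil_or_concat l with rfl | ⟨l₀, v, rfl⟩
        · simp
        · rw [List.concat_eq_append] at *
          obtain ⟨C, Q, y, h1, h2, h3, h4⟩ := inv_lemma l₀ v hcg hnd
          have hdeg1 : deg ((l₀ ++ [v]).prod)
              = Multiplicative.ofAdd (((l₀ ++ [v]).length : ℤ)) := deg_prod_isCG _ hcg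
          have hdeg2 : deg ((l₀ ++ [v]).prod)
              = Multiplicative.ofAdd (((((l₀ ++ [v]).prod).toWord).length : ℤ)) := by
            conv_lhs => rw [← mk_toWord (x := (l₀ ++ [v]).prod)]
            exact deg_mk_pos _ hpos
          have hlen : ((l₀ ++ [v]).length : ℤ) = ((((l₀ ++ [v]).prod).toWord).length : ℤ) :=
            Multiplicative.ofAdd.injective (hdeg1.symm.trans hdeg2)
          have hlen' : (l₀ ++ [v]).length = (((l₀ ++ [v]).prod).toWord).length := by
            exact_mod_cast hlen
          intro u hu
          have hb := h4 u hu
          have hnp : FreeGroup.norm u ≠ 0 := fun h0 =>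
            isCG_ne_one (hcg u hu) (norm_eq_zero.1 h0)
          omega
      have hof : ∀ u ∈ l, ∃ a, u = of a := fun u hu =>
        eq_of_norm_one (hcg u hu) (hall u hu)
      obtain ⟨as, rfl⟩ := exists_map_of l hof
      have htw : (((as.map of).prod : FreeGroup α)).toWord = as.map (fun a => (a, true)) := by
        rw [prod_map_of, toWord_mk_self (isRed_of_positive ?_)]
        intro p hp
        simp at hp
        obtain ⟨a, -, rfl⟩ := hp
        rfl
      rw [htw, List.map_map]
      have : ((fun p : α × Bool => of p.1) ∘ fun a => (a, true)) = (of : α → FreeGroup α) := rfl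
      rw [this]
      exact Relation.EqvGen.refl _
    · -- a decreasing move exists
      rw [NoDec] at hnd
      push_neg at hnd
      obtain ⟨l₁, a, b, l₂, heq, hlt⟩ := hnd
      rcases le_or_gt (FreeGroup.norm b) (FreeGroup.norm (a * b * a⁻¹)) with hle | hlt1
      · -- then second must fail
        have hlt2 : FreeGroup.norm (b⁻¹ * a * b) < FreeGroup.norm a := hlt hle
        set l'' := l₁ ++ b :: (b⁻¹ * a * b) :: l₂ with hl''
        have hstep : LStep l'' l := by
          refine ⟨l₁, b, b⁻¹ * a * b, l₂, rfl, ?_⟩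
          rw [heq]
          congr 2
          group
        have hprod : l''.prod = l.prod := by
          rw [heq, hl'']
          simp only [List.prod_append, List.prod_cons]
          group
        have hsum'' : (l''.map FreeGroup.norm).sum ≤ N := by
          have h1 : (l.map FreeGroup.norm).sum
              = (l₁.map FreeGroup.norm).sum + (FreeGroup.norm a + (FreeGroup.norm b
                + (l₂.map FreeGroup.norm).sum)) := by
            rw [heq]; simp
          have h2 : (l''.map FreeGroup.norm).sum
              = (l₁.map FreeGroup.norm).sum + (FreeGroup.norm b + (FreeGroup.norm (b⁻¹ * a * b)
                + (l₂.map FreeGroup.norm).sum)) := by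
            rw [hl'']; simp
          omega
        have hcg'' : ∀ u ∈ l'', IsCG u := by
          intro u hu
          rw [hl''] at hu
          simp only [List.mem_append, List.mem_cons] at hu
          rcases hu with hu | hu | hu | hu
          · exact hcg u (by rw [heq]; simp [hu])
          · subst hu; exact hcg u (by rw [heq]; simp)
          · subst hu
            have hb : IsCG a := hcg a (by rw [heq]; simp)
            have := isCG_conj (g := b⁻¹) hb
            simpa using this
          · exact hcg u (by rw [heq]; simp [hu])
        have hpos'' : ∀ p ∈ (l''.prod).toWord, p.2 = true := by rw [hprod]; exact hpos
        have hrec := ih l'' hsum'' hcg'' hpos''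
        rw [hprod] at hrec
        exact Relation.EqvGen.trans _ _ _
          (Relation.EqvGen.symm _ _ (Relation.EqvGen.rel _ _ hstep)) hrec
      · -- first move decreases
        set l' := l₁ ++ (a * b * a⁻¹) :: a :: l₂ with hl'
        have hstep : LStep l l' := ⟨l₁, a, b, l₂, heq, rfl⟩
        have hprod : l'.prod = l.prod := by
          rw [heq, hl']
          simp only [List.prod_append, List.prod_cons]
          group
        have hsum' : (l'.map FreeGroup.norm).sum ≤ N := by
          have h1 : (l.map FreeGroup.norm).sum
              = (l₁.map FreeGroup.norm).sum + (FreeGroup.norm a + (FreeGroup.norm b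
                + (l₂.map FreeGroup.norm).sum)) := by
            rw [heq]; simp
          have h2 : (l'.map FreeGroup.norm).sum
              = (l₁.map FreeGroup.norm).sum + (FreeGroup.norm (a * b * a⁻¹) + (FreeGroup.norm a
                + (l₂.map FreeGroup.norm).sum)) := by
            rw [hl']; simp
          omega
        have hcg' : ∀ u ∈ l', IsCG u := by
          intro u hu
          rw [hl'] at hu
          simp only [List.mem_append, List.mem_cons] at hu
          rcases hu with hu | hu | hu | hu
          · exact hcg u (by rw [heq]; simp [hu])
          · subst hu
            have hb : IsCG b := hcg b (by rw [heq]; simp)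
            exact isCG_conj (g := a) hb
          · subst hu; exact hcg u (by rw [heq]; simp)
          · exact hcg u (by rw [heq]; simp [hu])
        have hpos' : ∀ p ∈ (l'.prod).toWord, p.2 = true := by rw [hprod]; exact hpos
        have hrec := ih l' hsum' hcg' hpos'
        rw [hprod] at hrec
        exact Relation.EqvGen.trans _ _ _ (Relation.EqvGen.rel _ _ hstep) hrec

end HurwitzProof

/-- The Hurwitz move `τ_i` on `n`-tuples of elements of a group `G`. -/
def hmove {G : Type*} [Group G] {n : ℕ} (i : ℕ) (h : i + 1 < n) (g : Fin n → G) :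
    Fin n → G :=
  Function.update
    (Function.update g ⟨i, Nat.lt_of_succ_lt h⟩
      (g ⟨i, Nat.lt_of_succ_lt h⟩ * g ⟨i + 1, h⟩ * (g ⟨i, Nat.lt_of_succ_lt h⟩)⁻¹))
    ⟨i + 1, h⟩ (g ⟨i, Nat.lt_of_succ_lt h⟩)

/-- One step of the Hurwitz action of the braid group `B_n` on `G^n`. -/
def HurwitzStep {G : Type*} [Group G] {n : ℕ} (x y : Fin n → G) : Prop :=
  ∃ (i : ℕ) (h : i + 1 < n), y = hmove i h x

namespace HurwitzProof

variable {G : Type*} [Group G] {n : ℕ}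

lemma lstep_ofFn {f : Fin n → G} {L' : List G}
    (hL : ∃ (l₁ : List G) (a b : G) (l₂ : List G),
      List.ofFn f = l₁ ++ a :: b :: l₂ ∧ L' = l₁ ++ (a * b * a⁻¹) :: a :: l₂) :
    ∃ (i : ℕ) (hi : i + 1 < n), L' = List.ofFn (hmove i hi f) := by
  obtain ⟨l₁, a, b, l₂, heq, heq'⟩ := hL
  obtain ⟨i, hidef⟩ : ∃ i, l₁.length = i := ⟨_, rfl⟩
  have hlen : n = i + 2 + l₂.length := by
    have := congrArg List.length heq
    simp at this
    omega
  have hi : i + 1 < n := by omega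
  have hL1 : (l₁ ++ a :: b :: l₂).length = n := by simp; omega
  have hL2 : (l₁ ++ (a * b * a⁻¹) :: a :: l₂).length = n := by simp; omega
  refine ⟨i, hi, ?_⟩
  have hgf : ∀ (j : ℕ) (hj : j < n), (l₁ ++ a :: b :: l₂)[j]'(by omega) = f ⟨j, hj⟩ := by
    intro j hj
    have h0 : (List.ofFn f)[j]'(by simp; omega) = (l₁ ++ a :: b :: l₂)[j]'(by omega) :=
      List.getElem_of_eq heq _
    rw [← h0, List.getElem_ofFn]
  have hfa : f ⟨i, by omega⟩ = a := by
    rw [← hgf i (by omega), List.getElem_append_right (by omega)]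
    have e0 : i - l₁.length = 0 := by omega
    simp only [e0, List.getElem_cons_zero]
  have hfb : f ⟨i + 1, hi⟩ = b := by
    rw [← hgf (i + 1) hi, List.getElem_append_right (by omega)]
    have e0 : i + 1 - l₁.length = 1 := by omega
    simp only [e0, List.getElem_cons_succ, List.getElem_cons_zero]
  rw [heq']
  refine List.ext_getElem (by simp; omega) ?_
  intro j hj1 hj2
  simp only [List.getElem_ofFn]
  rcases lt_trichotomy j i with hji | hji | hji
  · have h1 : (l₁ ++ (a * b * a⁻¹) :: a :: l₂)[j]'(hj1) = l₁[j]'(by omega) :=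
      List.getElem_append_left (by omega)
    have h2 : (l₁ ++ a :: b :: l₂)[j]'(by omega) = l₁[j]'(by omega) :=
      List.getElem_append_left (by omega)
    rw [h1, ← h2, hgf j (by omega)]
    unfold hmove
    rw [Function.update_of_ne (by simp [Fin.ext_iff] <;> omega),
      Function.update_of_ne (by simp [Fin.ext_iff] <;> omega)]
  · subst hji
    have h1 : (l₁ ++ (a * b * a⁻¹) :: a :: l₂)[j]'(hj1) = a * b * a⁻¹ := by
      rw [List.getElem_append_right (by omega)]
      have e0 : j - l₁.length = 0 := by omega
      simp only [e0, List.getElem_cons_zero]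
    rw [h1]
    unfold hmove
    rw [Function.update_of_ne (by simp [Fin.ext_iff] <;> omega), Function.update_self]
    rw [hfa, hfb]
  · rcases Nat.lt_or_ge j (i + 2) with hji2 | hji2
    · have hj' : j = i + 1 := by omega
      subst hj'
      have h1 : (l₁ ++ (a * b * a⁻¹) :: a :: l₂)[i + 1]'(hj1) = a := by
        rw [List.getElem_append_right (by omega)]
        have e0 : i + 1 - l₁.length = 1 := by omega
        simp only [e0, List.getElem_cons_succ, List.getElem_cons_zero]
      rw [h1]
      unfold hmove
      rw [Function.update_self]
      exact hfa.symm
    · have h1 : (l₁ ++ (a * b * a⁻¹) :: a :: l₂)[j]'(hj1) = l₂[j - (i + 2)]'(by omega) := by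
        rw [List.getElem_append_right (by omega)]
        have e0 : j - l₁.length = (j - (i + 2)) + 1 + 1 := by omega
        simp only [e0, List.getElem_cons_succ]
      have h2 : (l₁ ++ a :: b :: l₂)[j]'(by omega) = l₂[j - (i + 2)]'(by omega) := by
        rw [List.getElem_append_right (by omega)]
        have e0 : j - l₁.length = (j - (i + 2)) + 1 + 1 := by omega
        simp only [e0, List.getElem_cons_succ]
      rw [h1, ← h2, hgf j (by omega)]
      unfold hmove
      rw [Function.update_of_ne (by simp [Fin.ext_iff] <;> omega),
        Function.update_of_ne (by simp [Fin.ext_iff] <;> omega)]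

variable {α : Type*} [DecidableEq α]

lemma lstep_length {l l' : List (FreeGroup α)} (h : LStep l l') : l.length = l'.length := by
  obtain ⟨l₁, a, b, l₂, h1, h2⟩ := h
  rw [h1, h2]
  simp

lemma eqvgen_lstep_length {l l' : List (FreeGroup α)}
    (h : Relation.EqvGen LStep l l') : l.length = l'.length := by
  induction h with
  | rel x y hxy => exact lstep_length hxy
  | refl x => rfl
  | symm x y _ ih => exact ih.symm
  | trans x y z _ _ ih1 ih2 => exact ih1.trans ih2

lemma transfer {n : ℕ} {L L' : List (FreeGroup α)} (h : Relation.EqvGen LStep L L') :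
    ∀ (f g : Fin n → FreeGroup α), L = List.ofFn f → L' = List.ofFn g →
      Relation.EqvGen HurwitzStep f g := by
  induction h with
  | rel x y hxy =>
    intro f g hf hg
    subst hf
    obtain ⟨i, hi, hy⟩ := lstep_ofFn hxy
    have hgm : g = hmove i hi f := List.ofFn_injective (by rw [← hg, hy])
    exact Relation.EqvGen.rel _ _ ⟨i, hi, hgm⟩
  | refl x =>
    intro f g hf hg
    have : f = g := List.ofFn_injective (by rw [← hf, ← hg])
    rw [this]
    exact Relation.EqvGen.refl _
  | symm x y hxy ih =>
    intro f g hf hg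
    exact Relation.EqvGen.symm _ _ (ih g f hg hf)
  | trans x y z hxy _ ih1 ih2 =>
    intro f g hf hg
    have hlen : y.length = n := by
      rw [← eqvgen_lstep_length hxy, hf]
      simp
    have hym : y = List.ofFn (fun j : Fin n => y[(j : ℕ)]'(by rw [hlen]; exact j.2)) := by
      refine List.ext_getElem (by simp [hlen]) ?_
      intro j hj1 hj2
      simp
    exact Relation.EqvGen.trans _ _ _ (ih1 f _ hf hym) (ih2 _ g hym hg)

end HurwitzProof


open HurwitzProof FreeGroup in
/-- Artin's theorem: the Hurwitz action of `B_n` on the set `Red(γ)` of `n`-tuples of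
conjugates of the generators of the free group `F_n` whose product is the Coxeter
element `γ = σ₁⋯σₙ` is transitive. -/
theorem stmt_8 {n : ℕ} (r r' : Fin n → FreeGroup (Fin n))
    (hr : (∀ i, ∃ (j : Fin n) (w : FreeGroup (Fin n)), r i = w * FreeGroup.of j * w⁻¹) ∧
      (List.ofFn r).prod = (List.ofFn fun i => (FreeGroup.of i : FreeGroup (Fin n))).prod)
    (hr' : (∀ i, ∃ (j : Fin n) (w : FreeGroup (Fin n)), r' i = w * FreeGroup.of j * w⁻¹) ∧
      (List.ofFn r').prod = (List.ofFn fun i => (FreeGroup.of i : FreeGroup (Fin n))).prod) :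
    Relation.EqvGen HurwitzStep r r' := by
  have hγ : (List.ofFn fun i => (FreeGroup.of i : FreeGroup (Fin n))).prod
      = mk ((List.finRange n).map (fun a => (a, true))) := by
    rw [← prod_map_of, ← List.ofFn_eq_map]
  have hγred : IsRed ((List.finRange n).map (fun a => (a, true))) := by
    refine isRed_of_positive ?_
    intro p hp
    simp at hp
    obtain ⟨a, -, rfl⟩ := hp
    rfl
  have hpos : ∀ p ∈ ((List.ofFn fun i => (FreeGroup.of i : FreeGroup (Fin n))).prod).toWord,
      p.2 = true := by
    rw [hγ, toWord_mk_self hγred]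
    intro p hp
    simp at hp
    obtain ⟨a, -, rfl⟩ := hp
    rfl
  have hcg : ∀ u ∈ List.ofFn r, IsCG u := by
    intro u hu
    rw [List.mem_ofFn] at hu
    obtain ⟨i, rfl⟩ := hu
    obtain ⟨j, w, hw⟩ := hr.1 i
    exact ⟨j, w, hw⟩
  have hcg' : ∀ u ∈ List.ofFn r', IsCG u := by
    intro u hu
    rw [List.mem_ofFn] at hu
    obtain ⟨i, rfl⟩ := hu
    obtain ⟨j, w, hw⟩ := hr'.1 i
    exact ⟨j, w, hw⟩
  have h1 := main_list ((List.ofFn r).map FreeGroup.norm).sum (List.ofFn r) le_rfl hcg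
    (by rw [hr.2]; exact hpos)
  have h2 := main_list ((List.ofFn r').map FreeGroup.norm).sum (List.ofFn r') le_rfl hcg'
    (by rw [hr'.2]; exact hpos)
  rw [hr.2] at h1
  rw [hr'.2] at h2
  have h3 : Relation.EqvGen LStep (List.ofFn r) (List.ofFn r') :=
    Relation.EqvGen.trans _ _ _ h1 (Relation.EqvGen.symm _ _ h2)
  exact transfer h3 r r' rfl rfl
end

section
/- In the free group F_2, the Hurwitz action of the braid group B_2 ≅ ℤ on the pair (σ_1, σ_2) is free: if k ≠ 0 then τ_1^k(σ_1, σ_2) ≠ (σ_1, σ_2), where τ_1(g_1,g_2) = (g_1 g_2 g_1^{-1}, g_1). -/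
/-- The Hurwitz move `τ₁` of `B₂` acting on pairs of elements of the free group `F₂`,
with inverse `(g₁,g₂) ↦ (g₂, g₂⁻¹ g₁ g₂)`. -/
noncomputable def tauOne : Equiv.Perm (FreeGroup Bool × FreeGroup Bool) where
  toFun p := (p.1 * p.2 * p.1⁻¹, p.1)
  invFun p := (p.2, p.2⁻¹ * p.1 * p.2)
  left_inv := by rintro ⟨a, b⟩; simp [mul_assoc]
  right_inv := by rintro ⟨a, b⟩; simp [mul_assoc]

/-- The reflection `x ↦ -x` of `ℤ`. -/
def refl0 : Equiv.Perm ℤ := Function.Involutive.toPerm (fun x => -x) (by intro x; ring)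

/-- The reflection `x ↦ -x - 1` of `ℤ`. -/
def refl1 : Equiv.Perm ℤ := Function.Involutive.toPerm (fun x => -x - 1) (by intro x; ring)

lemma refl0_apply (x : ℤ) : refl0 x = -x := rfl
lemma refl1_apply (x : ℤ) : refl1 x = -x - 1 := rfl

/-- `refl0 * refl1` is the translation `x ↦ x + 1`, so its `n`-th power translates by `n`. -/
lemma trans_pow_apply (n : ℕ) (x : ℤ) : ((refl0 * refl1) ^ n) x = x + n := by
  induction n generalizing x with
  | zero => simp
  | succ k ih =>
    rw [pow_succ, Equiv.Perm.mul_apply, Equiv.Perm.mul_apply, refl1_apply, refl0_apply,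
      show -(-x-1) = x + 1 by ring, ih]
    push_cast; ring

lemma trans_pow_inv_apply (n : ℕ) (x : ℤ) : (((refl0 * refl1) ^ n)⁻¹) x = x - n := by
  have := trans_pow_apply n (x - n)
  simp only [sub_add_cancel] at this
  calc (((refl0 * refl1) ^ n)⁻¹) x
      = (((refl0 * refl1) ^ n)⁻¹) (((refl0 * refl1) ^ n) (x - n)) := by rw [this]
    _ = x - n := Equiv.symm_apply_apply _ _

/-- The representation `F₂ → Perm ℤ` sending `σ₁` to `refl0` and `σ₂` to `refl1`. -/
noncomputable def rep : FreeGroup Bool →* Equiv.Perm ℤ :=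
  FreeGroup.lift (fun t => if t then refl1 else refl0)

/-- In `F₂`, if `(σ₁σ₂)^n σ₁ (σ₁σ₂)^{-n} = σ₁` then `n = 0`. -/
lemma conj_eq_iff (n : ℕ)
    (h : (FreeGroup.of false * FreeGroup.of true) ^ n * FreeGroup.of false *
      ((FreeGroup.of false * FreeGroup.of true) ^ n)⁻¹ = FreeGroup.of false) : n = 0 := by
  have h2 := congrArg rep h
  have rf : rep (FreeGroup.of false) = refl0 := by simp [rep]
  have rt : rep (FreeGroup.of true) = refl1 := by simp [rep]
  simp only [map_mul, map_pow, map_inv, rf, rt] at h2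
  have h3 := congrArg (fun σ : Equiv.Perm ℤ => σ 0) h2
  simp only [Equiv.Perm.mul_apply, trans_pow_inv_apply, trans_pow_apply, refl0_apply] at h3
  omega

/-- `τ₁²` conjugates both entries by the (invariant) product, hence
`τ₁^{2n}` conjugates by its `n`-th power. -/
lemma tauOne_sq_pow (n : ℕ) (a b : FreeGroup Bool) :
    (tauOne ^ (2 * n)) (a, b) =
      ((a * b) ^ n * a * ((a * b) ^ n)⁻¹, (a * b) ^ n * b * ((a * b) ^ n)⁻¹) := by
  induction n with
  | zero => simp
  | succ k ih =>
    rw [show 2 * (k + 1) = 2 + 2 * k by ring, pow_add, Equiv.Perm.mul_apply, ih, sq,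
      Equiv.Perm.mul_apply]
    show tauOne (tauOne _) = _
    simp only [tauOne, Equiv.coe_fn_mk]
    refine Prod.ext ?_ ?_ <;>
      · simp only
        group
        rw [show (1 + (k:ℤ)) = (k:ℤ) + 1 by ring, show (-1 - (k:ℤ)) = -1 + -(k:ℤ) by ring,
          zpow_add, zpow_add, zpow_one]
        group

/-- The Hurwitz action of `B₂ ≅ ℤ` on the pair `(σ₁, σ₂)` of generators of `F₂`
is free: no nonzero power of `τ₁` fixes `(σ₁, σ₂)`. -/
theorem stmt_9 (m : ℤ) (hm : m ≠ 0) :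
    (tauOne ^ m) (FreeGroup.of false, FreeGroup.of true) ≠
      (FreeGroup.of false, FreeGroup.of true) := by
  intro h
  set p : FreeGroup Bool × FreeGroup Bool := (FreeGroup.of false, FreeGroup.of true) with hp
  have h2 : (tauOne ^ (2 * m)) p = p := by
    rw [two_mul, zpow_add, Equiv.Perm.mul_apply, h, h]
  have hfix : ∀ k : ℤ, (tauOne ^ k) p = p → (tauOne ^ k.natAbs) p = p := by
    intro k hk
    rcases Int.natAbs_eq k with he | he
    · rw [← zpow_natCast, ← he]; exact hk
    · rw [← zpow_natCast, ← neg_neg (k.natAbs : ℤ), ← he, zpow_neg]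
      conv_lhs => rw [← hk]
      exact Equiv.symm_apply_apply _ _
  have h3 := hfix _ h2
  have hnat : (2 * m).natAbs = 2 * m.natAbs := by simp [Int.natAbs_mul]
  rw [hnat, hp, tauOne_sq_pow] at h3
  have h4 := conj_eq_iff m.natAbs (congrArg Prod.fst h3)
  omega
end
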